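/- Let a, b be coprime integers, let d be a positive integer, and let c₁, c₂, a₁, a₂, d₁, d₂ be integers. Set A = ((a₁, a₂), (a₂ − c₁·b, −a₁ + c₁·a)) and D = ((d₁, d₂ + c₂·b), (d₂, −d₁ + c₂·a)). If every entry of AᵀD − I₂ is divisible by d, then det A is coprime to d and c₂·det A ≡ c₁ (mod d); in particular gcd(c₁, d) = gcd(c₂, d). -/

import Mathlib

open Matrix

lemma Int.gcd_eq_of_dvd_sub {x y n : ℤ} (h : n ∣ x - y) : Int.gcd x n = Int.gcd y n := by
  have key : ∀ u v : ℤ, n ∣ u - v → (Int.gcd u n : ℤ) ∣ Int.gcd v n := by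
    intro u v huv
    refine Int.dvd_coe_gcd ?_ (Int.gcd_dvd_right _ _)
    have h1 : (Int.gcd u n : ℤ) ∣ u := Int.gcd_dvd_left _ _
    have h2 : (Int.gcd u n : ℤ) ∣ u - v := dvd_trans (Int.gcd_dvd_right _ _) huv
    have := dvd_sub h1 h2
    simpa using this
  have h1 := key x y h
  have h2 := key y x (by simpa [neg_sub] using (dvd_neg.mpr h))
  exact Nat.dvd_antisymm (Int.natCast_dvd_natCast.mp h1) (Int.natCast_dvd_natCast.mp h2)

theorem congruence_relation_c1_c2
    (a b : ℤ) (hab : IsCoprime a b) (d : ℤ) (hd : 0 < d)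
    (c₁ c₂ a₁ a₂ d₁ d₂ : ℤ)
    (A D : Matrix (Fin 2) (Fin 2) ℤ)
    (hA : A = !![a₁, a₂; a₂ - c₁ * b, -a₁ + c₁ * a])
    (hD : D = !![d₁, d₂ + c₂ * b; d₂, -d₁ + c₂ * a])
    (hcong : ∀ i j, d ∣ (Aᵀ * D - 1) i j) :
    IsCoprime A.det d ∧ c₂ * A.det ≡ c₁ [ZMOD d] ∧ Int.gcd c₁ d = Int.gcd c₂ d := by
  subst hA hD
  have hP : d ∣ a₁ * d₁ + (a₂ - c₁ * b) * d₂ - 1 := by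
    have h := hcong 0 0
    simp [Matrix.sub_apply, Matrix.mul_apply, Fin.sum_univ_two, Matrix.one_apply] at h
    convert h using 1 <;> ring
  have hQ : d ∣ a₁ * (d₂ + c₂ * b) + (a₂ - c₁ * b) * (-d₁ + c₂ * a) := by
    have h := hcong 0 1
    simp [Matrix.sub_apply, Matrix.mul_apply, Fin.sum_univ_two, Matrix.one_apply] at h
    convert h using 1 <;> ring
  have hR : d ∣ a₂ * d₁ + (-a₁ + c₁ * a) * d₂ := by
    have h := hcong 1 0
    simp [Matrix.sub_apply, Matrix.mul_apply, Fin.sum_univ_two, Matrix.one_apply] at h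
    convert h using 1 <;> ring
  have hS : d ∣ a₂ * (d₂ + c₂ * b) + (-a₁ + c₁ * a) * (-d₁ + c₂ * a) - 1 := by
    have h := hcong 1 1
    simp [Matrix.sub_apply, Matrix.mul_apply, Fin.sum_univ_two, Matrix.one_apply] at h
    convert h using 1 <;> ring
  set e : ℤ := a₁ * (-a₁ + c₁ * a) - a₂ * (a₂ - c₁ * b) with he
  have hdet : (!![a₁, a₂; a₂ - c₁ * b, -a₁ + c₁ * a] : Matrix (Fin 2) (Fin 2) ℤ).det = e := by
    simp [Matrix.det_fin_two_of, he] <;>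
    ring
  set f : ℤ := d₁ * (-d₁ + c₂ * a) - d₂ * (d₂ + c₂ * b) with hf
  -- coprimality
  have hef : d ∣ e * f - 1 := by
    have h := dvd_sub (dvd_add (dvd_add
        (hP.mul_left (a₂ * (d₂ + c₂ * b) + (-a₁ + c₁ * a) * (-d₁ + c₂ * a) - 1)) hP) hS)
      (hQ.mul_left (a₂ * d₁ + (-a₁ + c₁ * a) * d₂))
    convert h using 1
    rfl; simp only [he, hf]; ring
  obtain ⟨k, hk⟩ := hef
  have hcop : IsCoprime e d := ⟨f, -k, by linarith [hk]⟩
  -- congruence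
  have hX : d ∣ e * c₂ - c₁ := by
    have hb : d ∣ b * (e * c₂ - c₁) := by
      have h := dvd_sub (dvd_sub (hQ.mul_left (-a₁ + c₁ * a)) (hS.mul_left (a₂ - c₁ * b)))
        (dvd_add (hP.mul_left (-a₂)) (hR.mul_left a₁))
      convert h using 1
      rfl; simp only [he]; ring
    have ha : d ∣ a * (e * c₂ - c₁) := by
      have h := dvd_add (dvd_sub (hP.mul_left (-a₁ + c₁ * a)) (hR.mul_left (a₂ - c₁ * b)))
        (dvd_add (hQ.mul_left (-a₂)) (hS.mul_left a₁))
      convert h using 1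
      rfl; simp only [he]; ring
    obtain ⟨u, v, huv⟩ := hab
    have : e * c₂ - c₁ = u * (a * (e * c₂ - c₁)) + v * (b * (e * c₂ - c₁)) := by
      linear_combination (c₁ - e * c₂) * huv
    rw [this]
    exact dvd_add (ha.mul_left u) (hb.mul_left v)
  refine ⟨hdet ▸ hcop, ?_, ?_⟩
  · rw [hdet]
    refine Int.modEq_iff_dvd.mpr ?_
    have := dvd_neg.mpr hX
    convert this using 1; rfl; ring
  · have h1 : Int.gcd c₁ d = Int.gcd (c₂ * e) d :=
      Int.gcd_eq_of_dvd_sub (by convert dvd_neg.mpr hX using 1; rfl; ring)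
    rw [h1]
    have hcop' : Nat.Coprime e.natAbs d.natAbs := Int.isCoprime_iff_gcd_eq_one.mp hcop
    unfold Int.gcd
    rw [Int.natAbs_mul]
    exact Nat.Coprime.gcd_mul_right_cancel _ hcop'
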